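/- Let u = (u_n)_{n ≥ 0} be a fixed point of a primitive morphism on a finite alphabet. Then the palindrome complexity pal_u(k) is bounded: there exists a constant C such that pal_u(k) ≤ C for all k ≥ 1. -/

import Mathlib

namespace PalPaper

variable {α : Type*}

/-- The finite word `u i, u (i+1), …, u (i+k-1)` read off the infinite sequence `u`. -/
def factorAt (u : ℕ → α) (i k : ℕ) : List α :=
  (List.range k).map fun j => u (i + j)

/-- `w` occurs as a contiguous block (factor) in the infinite sequence `u`. -/
def IsFactor (u : ℕ → α) (w : List α) : Prop :=
  ∃ i, w = factorAt u i w.length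

/-- A palindrome is a word equal to its reversal. -/
def IsPalindrome (w : List α) : Prop := w.reverse = w

/-- Number of distinct factors of length `k` of `u`. -/
noncomputable def facComplexity (u : ℕ → α) (k : ℕ) : ℕ :=
  Set.ncard {w : List α | w.length = k ∧ IsFactor u w}

/-- Number of distinct palindromic factors of length `k` of `u`. -/
noncomputable def palComplexity (u : ℕ → α) (k : ℕ) : ℕ :=
  Set.ncard {w : List α | w.length = k ∧ IsFactor u w ∧ IsPalindrome w}

/-- `p ≥ 1` is a period of the finite word `w`. -/
def IsPeriodOf (p : ℕ) (w : List α) : Prop :=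
  1 ≤ p ∧ ∀ i (h : i + p < w.length), w[i]'(by omega) = w[i + p]'h

/-- The minimal period of a finite word. -/
noncomputable def minPeriod (w : List α) : ℕ := sInf {p | IsPeriodOf p w}

/-- The prefix of length `m` of the infinite sequence `u`, as a finite word. -/
def seqPrefix (u : ℕ → α) (m : ℕ) : List α := (List.range m).map u

/-- The word `σ(u 0) σ(u 1) ⋯ σ(u (n-1))`. -/
def substPrefix (σ : α → List α) (u : ℕ → α) (n : ℕ) : List α :=
  (List.range n).flatMap fun i => σ (u i)

/-- `v = σ(u)`: every word `σ(u 0) ⋯ σ(u (n-1))` is the corresponding prefix of `v`. -/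
def IsMorphicImage (σ : α → List α) (u v : ℕ → α) : Prop :=
  ∀ n, substPrefix σ u n = seqPrefix v (substPrefix σ u n).length

/-- `u` is a fixed point of the morphism `σ`, i.e. `σ(u) = u`. -/
def IsFixedPointOf (σ : α → List α) (u : ℕ → α) : Prop := IsMorphicImage σ u u

/-- The `k`-th iterate of a morphism, applied to a letter. -/
def morphIter (σ : α → List α) : ℕ → α → List α
  | 0, a => [a]
  | k + 1, a => (σ a).flatMap (morphIter σ k)

/-- A morphism is primitive if some iterate maps every letter to a word
containing every letter. -/
def IsPrimitive (σ : α → List α) : Prop :=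
  ∃ k, 1 ≤ k ∧ ∀ a b : α, b ∈ morphIter σ k a

/-! ### basic factor machinery -/

/-- `w` matches the sequence `u` starting at position `i`. -/
def MatchAt (u : ℕ → α) (w : List α) (i : ℕ) : Prop :=
  ∀ j (h : j < w.length), w[j] = u (i + j)

@[simp] lemma factorAt_length (u : ℕ → α) (i k : ℕ) : (factorAt u i k).length = k := by
  simp [factorAt]

lemma factorAt_getElem (u : ℕ → α) {i k j : ℕ} (h : j < k) :
    (factorAt u i k)[j]'(by simpa using h) = u (i + j) := by
  simp [factorAt]

lemma matchAt_factorAt (u : ℕ → α) (i k : ℕ) : MatchAt u (factorAt u i k) i := by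
  intro j h
  rw [factorAt_length] at h
  exact factorAt_getElem u h

lemma eq_factorAt_of_matchAt {u : ℕ → α} {w : List α} {i : ℕ} (h : MatchAt u w i) :
    w = factorAt u i w.length := by
  refine List.ext_getElem (by simp) ?_
  intro j h1 h2
  rw [h j h1, factorAt_getElem u (by simpa using h2)]

lemma matchAt_iff {u : ℕ → α} {w : List α} {i : ℕ} :
    MatchAt u w i ↔ w = factorAt u i w.length :=
  ⟨eq_factorAt_of_matchAt, fun h => h ▸ matchAt_factorAt u i w.length⟩

lemma isFactor_iff {u : ℕ → α} {w : List α} : IsFactor u w ↔ ∃ i, MatchAt u w i := by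
  simp only [IsFactor, matchAt_iff]

lemma seqPrefix_eq_factorAt (u : ℕ → α) (m : ℕ) : seqPrefix u m = factorAt u 0 m := by
  simp [seqPrefix, factorAt]

@[simp] lemma seqPrefix_length (u : ℕ → α) (m : ℕ) : (seqPrefix u m).length = m := by
  simp [seqPrefix]

lemma matchAt_seqPrefix (u : ℕ → α) (m : ℕ) : MatchAt u (seqPrefix u m) 0 := by
  rw [matchAt_iff, seqPrefix_length, seqPrefix_eq_factorAt]

/-- A sub-block of a word matching `u` is an infix. -/
lemma factorAt_infix_of_matchAt {u : ℕ → α} {y : List α} {q x n : ℕ}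
    (hm : MatchAt u y q) (h1 : q ≤ x) (h2 : x + n ≤ q + y.length) :
    factorAt u x n <:+: y := by
  have hlen : ((y.drop (x - q)).take n).length = n := by
    rw [List.length_take, List.length_drop]; omega
  have : factorAt u x n = (y.drop (x - q)).take n := by
    refine List.ext_getElem (by simp [hlen]) ?_
    intro j hj hj'
    rw [factorAt_getElem u (by simpa using hj)]
    rw [List.getElem_take, List.getElem_drop]
    rw [hm ((x - q) + j) (by omega)]
    congr 1; omega
  rw [this]
  exact ((List.take_prefix _ _).isInfix).trans ((List.drop_suffix _ _).isInfix)

lemma matchAt_of_infix {u : ℕ → α} {y w : List α} {q : ℕ}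
    (hw : w <:+: y) (hm : MatchAt u y q) :
    ∃ i, q ≤ i ∧ i + w.length ≤ q + y.length ∧ MatchAt u w i := by
  obtain ⟨s, t, rfl⟩ := hw
  refine ⟨q + s.length, by omega, by simp; omega, ?_⟩
  intro j hj
  have h' : s.length + j < (s ++ w ++ t).length := by simp; omega
  have := hm (s.length + j) h'
  rw [List.getElem_append_left (show s.length + j < (s ++ w).length by simp; omega)] at this
  rw [List.getElem_append_right (Nat.le_add_right _ _)] at this
  simp only [Nat.add_sub_cancel_left] at this
  rw [this]; congr 1; omega


/-! ### flatMap lemmas -/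

lemma infix_flatMap_of_infix {β : Type*} {w v : List α} (f : α → List β) (h : w <:+: v) :
    w.flatMap f <:+: v.flatMap f := by
  obtain ⟨s, t, rfl⟩ := h
  exact ⟨s.flatMap f, t.flatMap f, by simp [List.flatMap_append]⟩

lemma infix_flatMap_of_mem {β : Type*} {b : α} {l : List α} (f : α → List β) (h : b ∈ l) :
    f b <:+: l.flatMap f := by
  obtain ⟨s, t, rfl⟩ := List.append_of_mem h
  exact ⟨s.flatMap f, t.flatMap f, by simp [List.flatMap_append]⟩

lemma length_flatMap_le {β : Type*} {l : List α} {f : α → List β} {c : ℕ}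
    (h : ∀ b ∈ l, (f b).length ≤ c) : (l.flatMap f).length ≤ l.length * c := by
  rw [List.length_flatMap]
  calc (l.map (List.length ∘ f)).sum ≤ (l.map (fun _ => c)).sum :=
        List.sum_le_sum (by intro i hi; exact h i hi)
    _ = l.length * c := by rw [List.map_const', List.sum_replicate, smul_eq_mul]

lemma le_length_flatMap {β : Type*} {l : List α} {f : α → List β} {c : ℕ}
    (h : ∀ b ∈ l, c ≤ (f b).length) : l.length * c ≤ (l.flatMap f).length := by
  rw [List.length_flatMap]
  calc l.length * c = (l.map (fun _ => c)).sum := by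
        rw [List.map_const', List.sum_replicate, smul_eq_mul]
    _ ≤ (l.map (List.length ∘ f)).sum := List.sum_le_sum (by intro i hi; exact h i hi)

lemma le_length_flatMap_of_mem {β : Type*} {b : α} {l : List α} (f : α → List β) (h : b ∈ l) :
    (f b).length ≤ (l.flatMap f).length :=
  (infix_flatMap_of_mem f h).length_le

/-! ### morphIter lemmas -/

lemma morphIter_add (σ : α → List α) (p q : ℕ) (a : α) :
    morphIter σ (p + q) a = (morphIter σ q a).flatMap (morphIter σ p) := by
  induction q generalizing a with
  | zero => simp [morphIter]
  | succ q ih =>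
      show morphIter σ ((p + q) + 1) a = _
      rw [show morphIter σ ((p+q)+1) a = (σ a).flatMap (morphIter σ (p+q)) from rfl]
      rw [show morphIter σ (q+1) a = (σ a).flatMap (morphIter σ q) from rfl]
      rw [List.flatMap_assoc]
      exact List.flatMap_congr (fun b _ => ih b)

/-! ### fixed point machinery -/

lemma substPrefix_eq (σ : α → List α) (u : ℕ → α) (n : ℕ) :
    substPrefix σ u n = (seqPrefix u n).flatMap σ := by
  simp [substPrefix, seqPrefix, List.flatMap_map]

lemma pref_iter {σ : α → List α} {u : ℕ → α} (hu : IsFixedPointOf σ u) (m n : ℕ) :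
    MatchAt u ((seqPrefix u n).flatMap (morphIter σ m)) 0 := by
  induction m generalizing n with
  | zero =>
      have : (seqPrefix u n).flatMap (morphIter σ 0) = seqPrefix u n := by
        simp [morphIter]
      rw [this]; exact matchAt_seqPrefix u n
  | succ m ih =>
      have h1 : ∀ a, morphIter σ (m + 1) a = (σ a).flatMap (morphIter σ m) := fun a => rfl
      have : (seqPrefix u n).flatMap (morphIter σ (m+1))
          = ((seqPrefix u n).flatMap σ).flatMap (morphIter σ m) := by
        rw [List.flatMap_assoc]
        exact List.flatMap_congr (fun b _ => h1 b)
      rw [this, ← substPrefix_eq, hu n, substPrefix_eq]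
      exact ih _


/-! ### blocks -/

/-- Starting position of the `t`-th block when `u` is tiled by the words `g (u t)`. -/
def blockStart (g : α → List α) (u : ℕ → α) (t : ℕ) : ℕ :=
  ((seqPrefix u t).flatMap g).length

lemma seqPrefix_succ (u : ℕ → α) (t : ℕ) :
    seqPrefix u (t + 1) = seqPrefix u t ++ [u t] := by
  simp [seqPrefix, List.range_succ]

@[simp] lemma blockStart_zero (g : α → List α) (u : ℕ → α) : blockStart g u 0 = 0 := by
  simp [blockStart, seqPrefix]

lemma blockStart_succ (g : α → List α) (u : ℕ → α) (t : ℕ) :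
    blockStart g u (t + 1) = blockStart g u t + (g (u t)).length := by
  simp [blockStart, seqPrefix_succ, List.flatMap_append]

lemma matchAt_block {g : α → List α} {u : ℕ → α}
    (hg : ∀ n, MatchAt u ((seqPrefix u n).flatMap g) 0) (t : ℕ) :
    MatchAt u (g (u t)) (blockStart g u t) := by
  intro j hj
  have hB : ((seqPrefix u t).flatMap g).length = blockStart g u t := rfl
  have hsplit : (seqPrefix u (t+1)).flatMap g = (seqPrefix u t).flatMap g ++ g (u t) := by
    rw [seqPrefix_succ, List.flatMap_append]; simp
  have hlen : blockStart g u t + j < ((seqPrefix u (t+1)).flatMap g).length := by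
    rw [hsplit, List.length_append]; omega
  have h2 := hg (t+1) (blockStart g u t + j) hlen
  rw [List.getElem_of_eq hsplit, List.getElem_append_right (by omega)] at h2
  have hidx : blockStart g u t + j - ((seqPrefix u t).flatMap g).length = j := by omega
  simp only [hidx, Nat.zero_add] at h2
  exact h2

lemma exists_block {g : α → List α} {u : ℕ → α}
    (h1 : ∀ a, 1 ≤ (g a).length) (x : ℕ) :
    ∃ t, blockStart g u t ≤ x ∧ x < blockStart g u (t + 1) := by
  induction x with
  | zero =>
      exact ⟨0, by simp, by rw [blockStart_succ]; have := h1 (u 0); simp; omega⟩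
  | succ x ih =>
      obtain ⟨t, h2, h3⟩ := ih
      rcases Nat.lt_or_ge (x+1) (blockStart g u (t+1)) with h | h
      · exact ⟨t, by omega, h⟩
      · refine ⟨t+1, h, ?_⟩
        rw [blockStart_succ]
        have := h1 (u (t+1))
        omega


/-! ### growth lemmas for primitive morphisms -/

section Growth

variable [Fintype α] (σ : α → List α)

/-- An upper bound for the lengths `|σ a|`. -/
noncomputable def Mx : ℕ := max 1 (Finset.univ.sup fun a : α => (σ a).length)

lemma one_le_Mx : 1 ≤ Mx σ := by unfold Mx; exact le_max_left _ _

lemma two_le_length_of_mem {l : List α} {b1 b2 : α} (h1 : b1 ∈ l) (h2 : b2 ∈ l)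
    (hne : b1 ≠ b2) : 2 ≤ l.length := by
  rcases l with _ | ⟨x, _ | ⟨y, t⟩⟩
  · simp at h1
  · simp_all
  · simp only [List.length_cons]; omega

lemma sigma_len_le (a : α) : (σ a).length ≤ Mx σ := by
  unfold Mx
  exact le_max_of_le_right (Finset.le_sup (f := fun a => (σ a).length) (Finset.mem_univ a))

lemma length_morphIter_le (m : ℕ) (a : α) : (morphIter σ m a).length ≤ Mx σ ^ m := by
  induction m generalizing a with
  | zero => simp [morphIter]
  | succ m ih =>
      show ((σ a).flatMap (morphIter σ m)).length ≤ _
      calc ((σ a).flatMap (morphIter σ m)).length ≤ (σ a).length * Mx σ ^ m :=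
            length_flatMap_le (fun b _ => ih b)
        _ ≤ Mx σ * Mx σ ^ m := Nat.mul_le_mul_right _ (sigma_len_le σ a)
        _ = Mx σ ^ (m + 1) := by ring

variable {σ} {k0 : ℕ} (hk0 : 1 ≤ k0) (hprim : ∀ a b : α, b ∈ morphIter σ k0 a)

include hk0 hprim in
lemma sigma_ne_nil (a : α) : σ a ≠ [] := by
  intro h
  obtain ⟨k1, rfl⟩ : ∃ k1, k0 = k1 + 1 := ⟨k0 - 1, by omega⟩
  have h2 : morphIter σ (k1 + 1) a = [] := by
    show (σ a).flatMap (morphIter σ k1) = []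
    rw [h]; rfl
  have h3 := hprim a a
  rw [h2] at h3
  simp at h3

include hk0 hprim in
lemma one_le_length_morphIter (m : ℕ) (a : α) : 1 ≤ (morphIter σ m a).length := by
  induction m generalizing a with
  | zero => simp [morphIter]
  | succ m ih =>
      show 1 ≤ ((σ a).flatMap (morphIter σ m)).length
      obtain ⟨b, hb⟩ := List.exists_mem_of_ne_nil _ (sigma_ne_nil hk0 hprim a)
      calc 1 ≤ (morphIter σ m b).length := ih b
        _ ≤ _ := le_length_flatMap_of_mem _ hb

include hprim in
lemma length_le_shift (m : ℕ) (c a : α) :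
    (morphIter σ m c).length ≤ (morphIter σ (m + k0) a).length := by
  rw [morphIter_add σ m k0]
  exact le_length_flatMap_of_mem _ (hprim a c)

include hprim in
lemma length_iter_ratio (m : ℕ) (a b : α) :
    (morphIter σ (m + k0) b).length ≤ Mx σ ^ k0 * (morphIter σ (m + k0) a).length := by
  rw [morphIter_add σ m k0]
  calc ((morphIter σ k0 b).flatMap (morphIter σ m)).length
      ≤ (morphIter σ k0 b).length * (morphIter σ (m + k0) a).length :=
        length_flatMap_le (fun c _ => length_le_shift hprim m c a)
    _ ≤ Mx σ ^ k0 * (morphIter σ (m + k0) a).length :=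
        Nat.mul_le_mul_right _ (length_morphIter_le σ k0 b)

include hprim in
lemma two_le_length_iter (hcard : 2 ≤ Fintype.card α) (a : α) :
    2 ≤ (morphIter σ k0 a).length := by
  obtain ⟨b1, b2, hne⟩ := Fintype.exists_pair_of_one_lt_card (α := α) (by omega)
  exact two_le_length_of_mem (hprim a b1) (hprim a b2) hne

include hprim in
lemma two_pow_le_length_iter (hcard : 2 ≤ Fintype.card α) (j : ℕ) (a : α) :
    2 ^ j ≤ (morphIter σ (k0 * j) a).length := by
  induction j generalizing a with
  | zero => simp [morphIter]
  | succ j ih =>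
      have : k0 * (j + 1) = k0 * j + k0 := by ring
      rw [this, morphIter_add σ (k0 * j) k0]
      calc 2 ^ (j + 1) = 2 * 2 ^ j := by ring
        _ ≤ (morphIter σ k0 a).length * 2 ^ j :=
            Nat.mul_le_mul_right _ (two_le_length_iter hprim hcard a)
        _ ≤ _ := le_length_flatMap (fun b _ => ih b)

include hk0 hprim in
lemma exists_good_level (hcard : 2 ≤ Fintype.card α) (a0 : α) (n : ℕ) (hn : 1 ≤ n) :
    ∃ m, (∀ b, n ≤ (morphIter σ m b).length) ∧
      (∀ b, (morphIter σ m b).length ≤ Mx σ ^ (3 * k0) * n) := by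
  have hex : ∃ j, n ≤ (morphIter σ (k0 * (j + 1)) a0).length := by
    refine ⟨n, le_trans (le_of_lt (Nat.lt_two_pow_self (n := n))) ?_⟩
    exact le_trans (Nat.pow_le_pow_right (by norm_num) (by omega))
      (two_pow_le_length_iter hprim hcard (n + 1) a0)
  obtain ⟨f, hfind, hmin⟩ : ∃ f, n ≤ (morphIter σ (k0 * (f + 1)) a0).length ∧
      ∀ f' < f, (morphIter σ (k0 * (f' + 1)) a0).length < n :=
    ⟨Nat.find hex, Nat.find_spec hex, fun f' h => by
      have := Nat.find_min hex h; omega⟩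
  refine ⟨k0 * (f + 1) + k0, ?_, ?_⟩
  · intro b
    exact le_trans hfind (length_le_shift hprim (k0 * (f + 1)) a0 b)
  · intro b
    have h1 : (morphIter σ (k0 * (f + 1) + k0) b).length
        ≤ (morphIter σ (k0 * (f + 1)) b).length * Mx σ ^ k0 := by
      rw [show k0 * (f + 1) + k0 = k0 + k0 * (f + 1) by ring,
        morphIter_add σ k0 (k0 * (f + 1))]
      exact length_flatMap_le (fun c _ => length_morphIter_le σ k0 c)
    have h2 : (morphIter σ (k0 * (f + 1)) b).length
        ≤ Mx σ ^ k0 * (morphIter σ (k0 * (f + 1)) a0).length := by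
      rw [show k0 * (f + 1) = k0 * f + k0 by ring]
      exact length_iter_ratio hprim (k0 * f) a0 b
    have h3 : (morphIter σ (k0 * (f + 1)) a0).length ≤ Mx σ ^ k0 * n := by
      rcases Nat.eq_zero_or_pos f with hf0 | hfpos
      · subst hf0
        calc (morphIter σ (k0 * 1) a0).length ≤ Mx σ ^ (k0 * 1) :=
              length_morphIter_le σ (k0 * 1) a0
          _ = Mx σ ^ k0 := by rw [mul_one]
          _ ≤ Mx σ ^ k0 * n := Nat.le_mul_of_pos_right _ hn
      · obtain ⟨f', rfl⟩ : ∃ f', f = f' + 1 := ⟨f - 1, by omega⟩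
        have hlt : (morphIter σ (k0 * (f' + 1)) a0).length < n :=
          hmin f' (by omega)
        rw [show k0 * (f' + 1 + 1) = k0 + k0 * (f' + 1) by ring,
          morphIter_add σ k0 (k0 * (f' + 1))]
        calc ((morphIter σ (k0 * (f' + 1)) a0).flatMap (morphIter σ k0)).length
            ≤ (morphIter σ (k0 * (f' + 1)) a0).length * Mx σ ^ k0 :=
              length_flatMap_le (fun c _ => length_morphIter_le σ k0 c)
          _ ≤ n * Mx σ ^ k0 := Nat.mul_le_mul_right _ (by omega)
          _ = Mx σ ^ k0 * n := by ring
    calc (morphIter σ (k0 * (f + 1) + k0) b).length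
        ≤ (morphIter σ (k0 * (f + 1)) b).length * Mx σ ^ k0 := h1
      _ ≤ (Mx σ ^ k0 * (morphIter σ (k0 * (f + 1)) a0).length) * Mx σ ^ k0 :=
          Nat.mul_le_mul_right _ h2
      _ ≤ (Mx σ ^ k0 * (Mx σ ^ k0 * n)) * Mx σ ^ k0 :=
          Nat.mul_le_mul_right _ (Nat.mul_le_mul_left _ h3)
      _ = Mx σ ^ (3 * k0) * n := by
          rw [show 3 * k0 = k0 + k0 + k0 by ring, pow_add, pow_add]; ring

end Growth


/-! ### linear recurrence -/

lemma matchAt_append {u : ℕ → α} {w w' : List α} {i : ℕ}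
    (h1 : MatchAt u w i) (h2 : MatchAt u w' (i + w.length)) :
    MatchAt u (w ++ w') i := by
  intro j hj
  rcases Nat.lt_or_ge j w.length with h | h
  · rw [List.getElem_append_left h]; exact h1 j h
  · rw [List.getElem_append_right h]
    have := h2 (j - w.length) (by simp at hj; omega)
    rw [this]; congr 1; omega

lemma factorAt_pair (u : ℕ → α) (t : ℕ) : factorAt u t 2 = [u t, u (t + 1)] := by
  simp [factorAt, List.range_succ]

lemma factor_in_two_blocks {σ : α → List α} {u : ℕ → α} (hu : IsFixedPointOf σ u)
    {m n : ℕ} (hn : 1 ≤ n) (hmin : ∀ b, n ≤ (morphIter σ m b).length) (x : ℕ) :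
    ∃ t, factorAt u x n <:+: (factorAt u t 2).flatMap (morphIter σ m) := by
  have hpref := pref_iter hu m
  obtain ⟨t, h1, h2⟩ := exists_block (g := morphIter σ m) (u := u)
    (fun a => le_trans hn (hmin a)) x
  refine ⟨t, ?_⟩
  have hb1 := matchAt_block hpref t
  have hb2 := matchAt_block hpref (t + 1)
  have hy : MatchAt u (morphIter σ m (u t) ++ morphIter σ m (u (t + 1)))
      (blockStart (morphIter σ m) u t) := by
    refine matchAt_append hb1 ?_
    rw [← blockStart_succ]
    exact hb2
  have hflat : (factorAt u t 2).flatMap (morphIter σ m)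
      = morphIter σ m (u t) ++ morphIter σ m (u (t + 1)) := by
    rw [factorAt_pair]; simp
  rw [hflat]
  refine factorAt_infix_of_matchAt hy h1 ?_
  have h3 := blockStart_succ (morphIter σ m) u t
  have h4 := hmin (u (t + 1))
  simp only [List.length_append]
  omega

lemma pair_bound [Fintype α] (u : ℕ → α) :
    ∃ D, ∀ t, ∃ t' ≤ D, u t' = u t ∧ u (t' + 1) = u (t + 1) := by
  classical
  set g : ℕ → α × α := fun t => (u t, u (t + 1)) with hg
  have hfin : (Set.range g).Finite := Set.toFinite _
  refine ⟨hfin.toFinset.sup (fun v => sInf {t | g t = v}), fun t => ?_⟩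
  have hmem : g t ∈ hfin.toFinset := by simp [Set.mem_range]
  have hne : {t' | g t' = g t}.Nonempty := ⟨t, rfl⟩
  have hInf := Nat.sInf_mem hne
  refine ⟨sInf {t' | g t' = g t}, Finset.le_sup (f := fun v => sInf {t | g t = v}) hmem, ?_, ?_⟩
  · exact congrArg Prod.fst hInf
  · exact congrArg Prod.snd hInf

theorem linear_recurrence [Fintype α] {σ : α → List α} {u : ℕ → α}
    (hu : IsFixedPointOf σ u) {k0 : ℕ} (hk0 : 1 ≤ k0)
    (hprim : ∀ a b : α, b ∈ morphIter σ k0 a) (hcard : 2 ≤ Fintype.card α) :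
    ∃ K, 1 ≤ K ∧ ∀ n x y, 1 ≤ n →
      ∃ i, y ≤ i ∧ i + n ≤ y + K * n ∧ factorAt u i n = factorAt u x n := by
  classical
  obtain ⟨D, hD⟩ := pair_bound u
  -- a prefix of u of length D + 2 sits inside some morphIter image of u 0
  set T := k0 * (D + 2) with hT
  have hTlen : D + 2 ≤ (morphIter σ T (u 0)).length := by
    calc D + 2 ≤ 2 ^ (D + 2) := le_of_lt Nat.lt_two_pow_self
      _ ≤ (morphIter σ (k0 * (D + 2)) (u 0)).length :=
          two_pow_le_length_iter hprim hcard (D + 2) (u 0)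
  set K := 2 * (Mx σ ^ (T + k0) * (Mx σ ^ (3 * k0))) with hK
  have hMx := one_le_Mx σ
  have hK1 : 1 ≤ K := by
    have h1 : 1 ≤ Mx σ ^ (T + k0) := Nat.one_le_pow _ _ (by omega)
    have h2 : 1 ≤ Mx σ ^ (3 * k0) := Nat.one_le_pow _ _ (by omega)
    calc 1 ≤ 2 * (1 * 1) := by norm_num
      _ ≤ K := by rw [hK]; exact Nat.mul_le_mul_left _ (Nat.mul_le_mul h1 h2)
  refine ⟨K, hK1, fun n x y hn => ?_⟩
  obtain ⟨m, hmin, hmax⟩ := exists_good_level hk0 hprim hcard (u 0) n hn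
  -- step 1 : the factor sits inside the image of a pair of letters
  obtain ⟨t, hw⟩ := factor_in_two_blocks hu hn hmin x
  -- step 2 : the pair occurs early
  obtain ⟨t', ht'D, he1, he2⟩ := hD t
  have hpair : factorAt u t' 2 = factorAt u t 2 := by
    rw [factorAt_pair, factorAt_pair, he1, he2]
  -- step 3 : the pair is an infix of the prefix of length D + 2
  have h3 : factorAt u t 2 <:+: seqPrefix u (D + 2) := by
    rw [← hpair]
    exact factorAt_infix_of_matchAt (matchAt_seqPrefix u (D + 2)) (Nat.zero_le _)
      (by simp; omega)
  -- step 4 : the prefix is an infix of morphIter σ T (u 0)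
  have h4 : seqPrefix u (D + 2) <:+: morphIter σ T (u 0) := by
    have hmatch : MatchAt u (morphIter σ T (u 0)) 0 := by
      have := pref_iter hu T 1
      have h5 : (seqPrefix u 1).flatMap (morphIter σ T) = morphIter σ T (u 0) := by
        simp [seqPrefix, List.range_succ]
      rwa [h5] at this
    rw [seqPrefix_eq_factorAt]
    exact factorAt_infix_of_matchAt hmatch (Nat.zero_le _) (by omega)
  -- step 5 : morphIter σ T (u 0) is an infix of morphIter σ (T + k0) a for every a
  have h5 : ∀ a, morphIter σ T (u 0) <:+: morphIter σ (T + k0) a := by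
    intro a
    rw [morphIter_add σ T k0]
    exact infix_flatMap_of_mem _ (hprim a (u 0))
  -- combine : factorAt u x n <:+: morphIter σ (m + (T + k0)) a for every a
  set M := m + (T + k0) with hM
  have hwM : ∀ a, factorAt u x n <:+: morphIter σ M a := by
    intro a
    have h6 : factorAt u t 2 <:+: morphIter σ (T + k0) a :=
      (h3.trans h4).trans (h5 a)
    have h7 := infix_flatMap_of_infix (morphIter σ m) h6
    rw [← morphIter_add σ m (T + k0)] at h7
    exact hw.trans h7
  -- block lengths at level M
  have hMlen : ∀ a, (morphIter σ M a).length ≤ Mx σ ^ (T + k0) * (Mx σ ^ (3 * k0) * n) := by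
    intro a
    rw [hM, morphIter_add σ m (T + k0)]
    calc ((morphIter σ (T + k0) a).flatMap (morphIter σ m)).length
        ≤ (morphIter σ (T + k0) a).length * (Mx σ ^ (3 * k0) * n) :=
          length_flatMap_le (fun c _ => hmax c)
      _ ≤ Mx σ ^ (T + k0) * (Mx σ ^ (3 * k0) * n) :=
          Nat.mul_le_mul_right _ (length_morphIter_le σ _ a)
  -- tile u with blocks at level M and find a block inside the window
  have hpref := pref_iter hu M
  have hone : ∀ a, 1 ≤ (morphIter σ M a).length := fun a =>
    one_le_length_morphIter hk0 hprim M a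
  obtain ⟨t0, hB1, hB2⟩ := exists_block (g := morphIter σ M) (u := u) hone y
  have hblk := matchAt_block hpref (t0 + 1)
  obtain ⟨i, hi1, hi2, hi3⟩ := matchAt_of_infix (hwM (u (t0 + 1))) hblk
  rw [factorAt_length] at hi2
  refine ⟨i, by omega, ?_, ?_⟩
  · have e1 := blockStart_succ (morphIter σ M) u t0
    have e2 := blockStart_succ (morphIter σ M) u (t0 + 1)
    have l1 := hMlen (u t0)
    have l2 := hMlen (u (t0 + 1))
    set X := Mx σ ^ (T + k0) * (Mx σ ^ (3 * k0) * n) with hX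
    have hKn : K * n = 2 * X := by rw [hK, hX]; ring
    omega
  · have h9 := eq_factorAt_of_matchAt hi3
    rw [factorAt_length] at h9
    exact h9.symm


/-! ### factor congruence lemmas -/

lemma factorAt_congr {u : ℕ → α} {i i' k : ℕ} (h : ∀ j < k, u (i + j) = u (i' + j)) :
    factorAt u i k = factorAt u i' k := by
  refine List.ext_getElem (by simp) (fun j h1 h2 => ?_)
  rw [factorAt_getElem u (by simpa using h1), factorAt_getElem u (by simpa using h1)]
  exact h j (by simpa using h1)

lemma factorAt_eq_imp {u : ℕ → α} {i i' k : ℕ} (h : factorAt u i k = factorAt u i' k) :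
    ∀ j < k, u (i + j) = u (i' + j) := by
  intro j hj
  have h2 := List.getElem_of_eq h (i := j) (by simpa using hj)
  rwa [factorAt_getElem u hj, factorAt_getElem u hj] at h2

/-! ### from local periodicity to global periodicity -/

lemma period_of_local {u : ℕ → α} {K : ℕ}
    (hLR : ∀ n x y, 1 ≤ n → ∃ i, y ≤ i ∧ i + n ≤ y + K * n ∧ factorAt u i n = factorAt u x n)
    {a d L : ℕ} (hd : 1 ≤ d) (hL : (2 * K + 2) * d ≤ L)
    (hper : ∀ s, s + d < L → u (a + s + d) = u (a + s)) :
    ∀ x, u (x + d) = u x := by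
  intro x
  obtain ⟨i, hi1, hi2, hi3⟩ := hLR (2 * d) x a (by omega)
  have heq := factorAt_eq_imp hi3
  have hP : K * (2 * d) + 2 * d = (2 * K + 2) * d := by ring
  have hs : (i - a) + d < L := by omega
  have h1 := hper (i - a) hs
  rw [show a + (i - a) = i from by omega] at h1
  have h2 := heq 0 (by omega)
  have h3 := heq d (by omega)
  simp only [Nat.add_zero] at h2
  rw [h3, h2] at h1
  exact h1

/-! ### palindromes with nearby occurrences force periodicity -/

lemma pal_matchAt_sym {u : ℕ → α} {w : List α} (hw : IsPalindrome w) {i : ℕ}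
    (hm : MatchAt u w i) :
    ∀ j, j < w.length → u (i + j) = u (i + (w.length - 1 - j)) := by
  intro j hj
  have h1 := hm j hj
  have h2 := hm (w.length - 1 - j) (by omega)
  rw [← h1, ← h2]
  have h4 : w.reverse[j]'(by simpa using hj) = w[w.length - 1 - j]'(by omega) :=
    List.getElem_reverse _
  have h5 : w.reverse[j]'(by simpa using hj) = w[j]'hj := List.getElem_of_eq hw _
  rw [← h5, h4]

lemma pal_gap {u : ℕ → α} {K : ℕ}
    (hLR : ∀ n x y, 1 ≤ n → ∃ i, y ≤ i ∧ i + n ≤ y + K * n ∧ factorAt u i n = factorAt u x n)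
    (hap : ¬∃ d, 1 ≤ d ∧ ∀ x, u (x + d) = u x)
    {k i e : ℕ} (he : 1 ≤ e) (hk : 1 ≤ k)
    (hp1 : ∀ j, j < k → u (i + j) = u (i + (k - 1 - j)))
    (hp2 : ∀ j, j < k → u (i + e + j) = u (i + e + (k - 1 - j))) :
    k + 1 ≤ (4 * K + 4) * e := by
  by_contra hcon
  push_neg at hcon
  apply hap
  refine ⟨2 * e, by omega, ?_⟩
  refine period_of_local hLR (a := i) (d := 2 * e) (L := k + e) (by omega) ?_ ?_
  · have hr : (2 * K + 2) * (2 * e) = (4 * K + 4) * e := by ring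
    omega
  · intro s hs
    have A := hp1 s (by omega)
    have B := hp2 (k - 1 - s - e) (by omega)
    rw [show i + e + (k - 1 - s - e) = i + (k - 1 - s) from by omega] at B
    rw [show k - 1 - (k - 1 - s - e) = s + e from by omega] at B
    rw [show i + e + (s + e) = i + s + 2 * e from by omega] at B
    exact (A.trans B).symm

/-! ### counting palindromic factors in the aperiodic case -/

lemma aperiodic_bound {u : ℕ → α} {K : ℕ}
    (hLR : ∀ n x y, 1 ≤ n → ∃ i, y ≤ i ∧ i + n ≤ y + K * n ∧ factorAt u i n = factorAt u x n)
    (hap : ¬∃ d, 1 ≤ d ∧ ∀ x, u (x + d) = u x)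
    (k : ℕ) (hk : 1 ≤ k) :
    palComplexity u k ≤ (4 * K + 4) * K + 1 := by
  classical
  rw [palComplexity]
  set S := {w : List α | w.length = k ∧ IsFactor u w ∧ IsPalindrome w} with hS
  have hocc : ∀ w ∈ S, ∃ i, i + k ≤ K * k ∧ factorAt u i k = w := by
    intro w hw
    obtain ⟨hlen, ⟨x, hx⟩, hpal⟩ := hw
    obtain ⟨i, hi1, hi2, hi3⟩ := hLR k x 0 hk
    refine ⟨i, by omega, ?_⟩
    rw [hi3]
    rw [hlen] at hx
    exact hx.symm
  set f : List α → ℕ := fun w =>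
    (if h : ∃ i, i + k ≤ K * k ∧ factorAt u i k = w then
      ((4 * K + 4) * h.choose) / (k + 1) else 0) with hf
  have key : ∀ w ∈ S, ∃ i, i + k ≤ K * k ∧ factorAt u i k = w ∧
      f w = ((4 * K + 4) * i) / (k + 1) := by
    intro w hw
    have h := hocc w hw
    refine ⟨h.choose, h.choose_spec.1, h.choose_spec.2, ?_⟩
    rw [hf]
    simp only
    rw [dif_pos h]
  -- the crucial injectivity argument
  have main : ∀ w1 ∈ S, ∀ w2 ∈ S, ∀ i1 i2 : ℕ, i1 + k ≤ K * k → i2 + k ≤ K * k →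
      factorAt u i1 k = w1 → factorAt u i2 k = w2 →
      ((4 * K + 4) * i1) / (k + 1) = ((4 * K + 4) * i2) / (k + 1) → i1 < i2 → False := by
    intro w1 hw1 w2 hw2 i1 i2 hb1 hb2 hfa1 hfa2 hdiv hlt
    obtain ⟨hlen1, _, hpal1⟩ := hw1
    obtain ⟨hlen2, _, hpal2⟩ := hw2
    have hm1 : MatchAt u w1 i1 := by rw [← hfa1]; exact matchAt_factorAt u i1 k
    have hm2 : MatchAt u w2 i2 := by rw [← hfa2]; exact matchAt_factorAt u i2 k
    have hp1 := pal_matchAt_sym hpal1 hm1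
    have hp2 := pal_matchAt_sym hpal2 hm2
    rw [hlen1] at hp1
    rw [hlen2] at hp2
    set e := i2 - i1 with he
    have hi2e : i2 = i1 + e := by omega
    rw [hi2e] at hp2
    have hgap := pal_gap hLR hap (by omega) hk hp1 hp2
    -- bucket contradiction
    have d1 := Nat.div_add_mod ((4 * K + 4) * i1) (k + 1)
    have d2 := Nat.div_add_mod ((4 * K + 4) * i2) (k + 1)
    have dd : (k + 1) * ((4 * K + 4) * i1 / (k + 1))
        = (k + 1) * ((4 * K + 4) * i2 / (k + 1)) := by rw [hdiv]
    have m1 : (4 * K + 4) * i1 % (k + 1) < k + 1 := Nat.mod_lt _ (by omega)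
    have m2 : (4 * K + 4) * i2 % (k + 1) < k + 1 := Nat.mod_lt _ (by omega)
    have hsum : (4 * K + 4) * i2 = (4 * K + 4) * i1 + (4 * K + 4) * e := by
      rw [hi2e]; ring
    omega
  calc S.ncard ≤ (↑(Finset.range ((4 * K + 4) * K + 1)) : Set ℕ).ncard := by
        apply Set.ncard_le_ncard_of_injOn f
        · intro w hw
          obtain ⟨i, hbound, _, hfw⟩ := key w hw
          simp only [Finset.coe_range, Set.mem_Iio]
          rw [hfw]
          have h1 : (4 * K + 4) * i ≤ ((4 * K + 4) * K) * (k + 1) := by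
            calc (4 * K + 4) * i ≤ (4 * K + 4) * (K * k) :=
                  Nat.mul_le_mul_left _ (by omega)
              _ = ((4 * K + 4) * K) * k := by ring
              _ ≤ ((4 * K + 4) * K) * (k + 1) := Nat.mul_le_mul_left _ (by omega)
          calc (4 * K + 4) * i / (k + 1) ≤ ((4 * K + 4) * K) * (k + 1) / (k + 1) :=
                Nat.div_le_div_right h1
            _ = (4 * K + 4) * K := Nat.mul_div_cancel _ (by omega)
            _ < (4 * K + 4) * K + 1 := by omega
        · intro w1 hw1 w2 hw2 hfeq
          obtain ⟨i1, hb1, hfa1, hfw1⟩ := key w1 hw1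
          obtain ⟨i2, hb2, hfa2, hfw2⟩ := key w2 hw2
          have hdiv : ((4 * K + 4) * i1) / (k + 1) = ((4 * K + 4) * i2) / (k + 1) := by
            rw [← hfw1, ← hfw2, hfeq]
          rcases Nat.lt_trichotomy i1 i2 with h | h | h
          · exact (main w1 hw1 w2 hw2 i1 i2 hb1 hb2 hfa1 hfa2 hdiv h).elim
          · rw [← hfa1, ← hfa2, h]
          · exact (main w2 hw2 w1 hw1 i2 i1 hb2 hb1 hfa2 hfa1 hdiv.symm h).elim

    _ = (4 * K + 4) * K + 1 := by
        rw [Set.ncard_coe_finset, Finset.card_range]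

/-! ### the periodic case -/

lemma periodic_bound {u : ℕ → α} {d : ℕ} (hd : 1 ≤ d) (hp : ∀ x, u (x + d) = u x)
    (k : ℕ) : palComplexity u k ≤ d := by
  classical
  have hmul : ∀ q y, u (y + q * d) = u y := by
    intro q
    induction q with
    | zero => simp
    | succ q ih =>
        intro y
        rw [show y + (q + 1) * d = (y + q * d) + d from by ring, hp, ih]
  have hmod : ∀ x j, u (x % d + j) = u (x + j) := by
    intro x j
    have e := Nat.mod_add_div x d
    have e2 : d * (x / d) = (x / d) * d := Nat.mul_comm _ _
    rw [show x + j = (x % d + j) + (x / d) * d from by omega]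
    exact (hmul (x / d) (x % d + j)).symm
  rw [palComplexity]
  calc Set.ncard {w : List α | w.length = k ∧ IsFactor u w ∧ IsPalindrome w}
      ≤ (↑(Finset.range d) : Set ℕ).ncard := by
        apply Set.ncard_le_ncard_of_injOn
          (fun w => (if h : IsFactor u w then h.choose else 0) % d)
        · intro w hw
          simp only [Finset.coe_range, Set.mem_Iio]
          exact Nat.mod_lt _ (by omega)
        · intro w1 hw1 w2 hw2 hfeq
          obtain ⟨hlen1, hfac1, _⟩ := hw1
          obtain ⟨hlen2, hfac2, _⟩ := hw2
          simp only at hfeq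
          rw [dif_pos hfac1, dif_pos hfac2] at hfeq
          have hcong : ∀ x : ℕ, factorAt u (x % d) k = factorAt u x k :=
            fun x => factorAt_congr (fun j _ => hmod x j)
          set c1 := hfac1.choose with hc1def
          set c2 := hfac2.choose with hc2def
          have hc1 : w1 = factorAt u c1 w1.length := hfac1.choose_spec
          have hc2 : w2 = factorAt u c2 w2.length := hfac2.choose_spec
          rw [hlen1] at hc1
          rw [hlen2] at hc2
          have h1 : w1 = factorAt u (c1 % d) k := hc1.trans (hcong c1).symm
          have h2 : w2 = factorAt u (c2 % d) k := hc2.trans (hcong c2).symm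
          rw [h1, h2, hfeq]

    _ = d := by rw [Set.ncard_coe_finset, Finset.card_range]


/-- Damanik–Zare: the palindrome complexity of a fixed point of a primitive
morphism on a finite alphabet is bounded. -/
theorem stmt7 {α : Type*} [Fintype α] (σ : α → List α) (hσ : IsPrimitive σ)
    (u : ℕ → α) (hu : IsFixedPointOf σ u) :
    ∃ C : ℕ, ∀ k, 1 ≤ k → palComplexity u k ≤ C := by
  classical
  obtain ⟨k0, hk0, hprim⟩ := hσ
  by_cases hper : ∃ d, 1 ≤ d ∧ ∀ x, u (x + d) = u x
  · obtain ⟨d, hd, hp⟩ := hper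
    exact ⟨d, fun k _ => periodic_bound hd hp k⟩
  · have hcard : 2 ≤ Fintype.card α := by
      by_contra h
      push_neg at h
      have hsub : Subsingleton α := Fintype.card_le_one_iff_subsingleton.mp (by omega)
      exact hper ⟨1, le_refl 1, fun x => Subsingleton.elim (u (x + 1)) (u x)⟩
    obtain ⟨K, hK1, hLR⟩ := linear_recurrence hu hk0 hprim hcard
    exact ⟨(4 * K + 4) * K + 1, fun k hk => aperiodic_bound hLR hper k hk⟩

end PalPaper
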